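/- The general solution of Q f = φ in polynomials is f = f_0 + p where f_0 = Σ_{n≥1}(A_n/n_ψ!)φ^{(n−1)} + ∫_ψ φ is a particular solution and p ranges over the kernel of Q, which consists exactly of the constant polynomials. -/

import Mathlib

open Polynomial Finset

/-- The ψ-derivative: `∂_ψ x^n = n_ψ x^{n-1}` (with `s 0 = 0`). -/
noncomputable def psiDeriv (s : ℕ → ℝ) (p : ℝ[X]) : ℝ[X] :=
  p.sum fun n a => C (a * s n) * X ^ (n - 1)

/-- The ψ-factorial `n_ψ! = n_ψ (n-1)_ψ ⋯ 1_ψ`, `0_ψ! = 1`. -/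
noncomputable def psiFact (s : ℕ → ℝ) : ℕ → ℝ
  | 0 => 1
  | n + 1 => s (n + 1) * psiFact s n

/-- A power series in `∂_ψ`: `∑_{k≥0} (c_k / k_ψ!) ∂_ψ^k`. -/
noncomputable def opSeries (s c : ℕ → ℝ) (p : ℝ[X]) : ℝ[X] :=
  ∑ k ∈ range (p.natDegree + 1), (c k / psiFact s k) • (psiDeriv s)^[k] p

/-- The ψ-integration: the linear map with `∫_ψ x^n = x^{n+1}/(n+1)_ψ`. -/
noncomputable def psiInt (s : ℕ → ℝ) (p : ℝ[X]) : ℝ[X] :=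
  p.sum fun n a => C (a / s (n + 1)) * X ^ (n + 1)

/-! Auxiliary lemmas. -/

lemma psiDeriv_zero (s : ℕ → ℝ) : psiDeriv s 0 = 0 := by
  simp [psiDeriv]

lemma psiDeriv_add (s : ℕ → ℝ) (p q : ℝ[X]) :
    psiDeriv s (p + q) = psiDeriv s p + psiDeriv s q := by
  unfold psiDeriv
  apply Polynomial.sum_add_index
  · intro i; simp
  · intro a b₁ b₂; rw [add_mul, C_add, add_mul]

lemma psiDeriv_monomial (s : ℕ → ℝ) (m : ℕ) (b : ℝ) :
    psiDeriv s (C b * X ^ m) = C (b * s m) * X ^ (m - 1) := by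
  by_cases hb : b = 0
  · simp [hb, psiDeriv_zero]
  · rw [C_mul_X_pow_eq_monomial]
    unfold psiDeriv
    rw [Polynomial.sum_monomial_index]
    simp

lemma psiDeriv_C (s : ℕ → ℝ) (hs0 : s 0 = 0) (a : ℝ) : psiDeriv s (C a) = 0 := by
  have := psiDeriv_monomial s 0 a
  simpa [hs0] using this

lemma psiDeriv_finsetSum {ι : Type*} (s : ℕ → ℝ) (t : Finset ι) (f : ι → ℝ[X]) :
    psiDeriv s (∑ i ∈ t, f i) = ∑ i ∈ t, psiDeriv s (f i) := by
  induction t using Finset.cons_induction with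
  | empty => simp [psiDeriv_zero]
  | cons a t h ih => rw [Finset.sum_cons, Finset.sum_cons, psiDeriv_add, ih]

lemma psiDeriv_natDegree_le (s : ℕ → ℝ) (p : ℝ[X]) :
    (psiDeriv s p).natDegree ≤ p.natDegree - 1 := by
  unfold psiDeriv Polynomial.sum
  apply Polynomial.natDegree_sum_le_of_forall_le
  intro n hn
  refine le_trans (natDegree_C_mul_X_pow_le _ _) ?_
  exact Nat.sub_le_sub_right (Polynomial.le_natDegree_of_mem_supp n hn) 1

lemma psiDeriv_iterate_zero (s : ℕ → ℝ) (k : ℕ) : (psiDeriv s)^[k] 0 = 0 :=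
  Function.iterate_fixed (psiDeriv_zero s) k

lemma psiDeriv_iterate_eq_zero (s : ℕ → ℝ) (hs0 : s 0 = 0) :
    ∀ k (p : ℝ[X]), p.natDegree < k → (psiDeriv s)^[k] p = 0 := by
  intro k
  induction k with
  | zero => intro p hp; omega
  | succ k ih =>
    intro p hp
    rw [Function.iterate_succ_apply]
    by_cases h0 : p.natDegree = 0
    · obtain ⟨a, ha⟩ := Polynomial.natDegree_eq_zero.mp h0
      rw [← ha, psiDeriv_C s hs0, psiDeriv_iterate_zero]
    · exact ih _ (lt_of_le_of_lt (psiDeriv_natDegree_le s p) (by omega))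

lemma psiDeriv_iterate_add (s : ℕ → ℝ) (k : ℕ) (p q : ℝ[X]) :
    (psiDeriv s)^[k] (p + q) = (psiDeriv s)^[k] p + (psiDeriv s)^[k] q := by
  induction k generalizing p q with
  | zero => rfl
  | succ k ih => rw [Function.iterate_succ_apply, Function.iterate_succ_apply,
      Function.iterate_succ_apply, psiDeriv_add, ih]

lemma opSeries_eq_sum_range (s c : ℕ → ℝ) (hs0 : s 0 = 0) (p : ℝ[X]) (N : ℕ)
    (hN : p.natDegree ≤ N) :
    opSeries s c p = ∑ k ∈ range (N + 1), (c k / psiFact s k) • (psiDeriv s)^[k] p := by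
  unfold opSeries
  apply Finset.sum_subset
  · exact Finset.range_subset_range.mpr (by omega)
  · intro k _ hk
    rw [Finset.mem_range, not_lt] at hk
    rw [psiDeriv_iterate_eq_zero s hs0 k p (by omega), smul_zero]

lemma opSeries_add (s c : ℕ → ℝ) (hs0 : s 0 = 0) (p q : ℝ[X]) :
    opSeries s c (p + q) = opSeries s c p + opSeries s c q := by
  set N := max p.natDegree q.natDegree with hN
  rw [opSeries_eq_sum_range s c hs0 p N (le_max_left _ _),
    opSeries_eq_sum_range s c hs0 q N (le_max_right _ _),
    opSeries_eq_sum_range s c hs0 (p + q) N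
      ((Polynomial.natDegree_add_le p q).trans (le_refl _)),
    ← Finset.sum_add_distrib]
  refine Finset.sum_congr rfl fun k _ => ?_
  rw [psiDeriv_iterate_add, smul_add]

lemma psiFact_zero (s : ℕ → ℝ) : psiFact s 0 = 1 := rfl

lemma opSeries_C (s c : ℕ → ℝ) (a : ℝ) : opSeries s c (C a) = C (c 0 * a) := by
  unfold opSeries
  rw [Polynomial.natDegree_C, Finset.sum_range_one]
  simp [psiFact_zero, Polynomial.smul_C]

/-- Kernel of `psiDeriv` is the constants. -/
lemma psiDeriv_eq_zero_imp (s : ℕ → ℝ) (hs0 : s 0 = 0) (hs : ∀ n : ℕ, 1 ≤ n → s n ≠ 0)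
    (q : ℝ[X]) (h : psiDeriv s q = 0) : ∃ a : ℝ, q = C a := by
  by_cases h0 : q.natDegree = 0
  · exact ⟨q.coeff 0, (Polynomial.eq_C_of_natDegree_eq_zero h0)⟩
  · exfalso
    set d := q.natDegree with hd
    have hd1 : 1 ≤ d := by omega
    have hq0 : q ≠ 0 := fun hq => h0 (by simp [hd, hq])
    have hco : (psiDeriv s q).coeff (d - 1) = q.coeff d * s d := by
      unfold psiDeriv Polynomial.sum
      rw [Polynomial.finset_sum_coeff]
      rw [Finset.sum_eq_single d]
      · rw [Polynomial.coeff_C_mul, Polynomial.coeff_X_pow, if_pos rfl, mul_one]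
      · intro n hn hnd
        rw [Polynomial.coeff_C_mul, Polynomial.coeff_X_pow]
        rcases Nat.eq_zero_or_pos n with h1 | h1
        · simp [h1, hs0]
        · have hne : d - 1 ≠ n - 1 := by omega
          rw [if_neg hne, mul_zero]
      · intro hdn
        exact absurd (Polynomial.mem_support_iff.mpr
          (by simpa [hd] using Polynomial.leadingCoeff_ne_zero.mpr hq0)) hdn
    rw [h] at hco
    simp only [Polynomial.coeff_zero] at hco
    have := mul_eq_zero.mp hco.symm
    rcases this with h1 | h1
    · exact Polynomial.leadingCoeff_ne_zero.mpr hq0 h1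
    · exact hs d hd1 h1

lemma psiDeriv_psiInt (s : ℕ → ℝ) (hs : ∀ n : ℕ, 1 ≤ n → s n ≠ 0) (φ : ℝ[X]) :
    psiDeriv s (psiInt s φ) = φ := by
  unfold psiInt
  rw [Polynomial.sum_def, psiDeriv_finsetSum]
  conv_rhs => rw [← Polynomial.sum_C_mul_X_pow_eq φ, Polynomial.sum_def]
  refine Finset.sum_congr rfl fun n _ => ?_
  rw [psiDeriv_monomial]
  rw [div_mul_cancel₀ _ (hs (n + 1) (by omega))]
  simp

lemma natDegree_psiInt_le (s : ℕ → ℝ) (φ : ℝ[X]) :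
    (psiInt s φ).natDegree ≤ φ.natDegree + 1 := by
  unfold psiInt Polynomial.sum
  apply Polynomial.natDegree_sum_le_of_forall_le
  intro n hn
  refine le_trans (natDegree_C_mul_X_pow_le _ _) ?_
  exact Nat.add_le_add_right (Polynomial.le_natDegree_of_mem_supp n hn) 1

lemma particular_eq (s A : ℕ → ℝ) (hs0 : s 0 = 0) (hs : ∀ n : ℕ, 1 ≤ n → s n ≠ 0)
    (hA0 : A 0 = 1) (φ : ℝ[X]) :
    opSeries s A (psiInt s φ) =
      (∑ n ∈ Finset.Icc 1 (φ.natDegree + 1),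
        (A n / psiFact s n) • (psiDeriv s)^[n - 1] φ) + psiInt s φ := by
  set d := φ.natDegree
  rw [opSeries_eq_sum_range s A hs0 (psiInt s φ) (d + 1) (natDegree_psiInt_le s φ)]
  rw [Finset.sum_range_succ']
  congr 1
  · rw [show Finset.Icc 1 (d + 1) = Finset.image (· + 1) (Finset.range (d + 1)) by
      ext n
      simp only [Finset.mem_Icc, Finset.mem_image, Finset.mem_range]
      constructor
      · rintro ⟨h1, h2⟩; exact ⟨n - 1, by omega, by omega⟩
      · rintro ⟨i, hi, rfl⟩; omega]
    rw [Finset.sum_image (by intro a _ b _ h; simp only at h; omega)]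
    refine Finset.sum_congr rfl fun i _ => ?_
    rw [Function.iterate_succ_apply, psiDeriv_psiInt s hs]
    simp
  · simp [psiFact_zero, hA0]

/-- the general polynomial solution of `Q f = φ` is
`f = f₀ + p` with `f₀ = ∑_{n≥1}(A_n/n_ψ!)φ^{(n-1)} + ∫_ψ φ` a particular
solution and `p` ranging over `ker Q`, which consists exactly of the
constant polynomials. -/
theorem psi_appell_general_solution
    (s : ℕ → ℝ) (hs0 : s 0 = 0) (hs : ∀ n : ℕ, 1 ≤ n → s n ≠ 0)
    (c : ℕ → ℝ) (hc0 : c 0 ≠ 0)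
    (A : ℕ → ℝ) (hA0 : A 0 = 1)
    (hinv : ∀ p : ℝ[X], opSeries s c (opSeries s A p) = p)
    (hinv' : ∀ p : ℝ[X], opSeries s A (opSeries s c p) = p)
    (φ : ℝ[X]) :
    (∀ p : ℝ[X], psiDeriv s (opSeries s c p) = 0 ↔ ∃ a : ℝ, p = C a) ∧
    (∀ f : ℝ[X],
      psiDeriv s (opSeries s c f) = φ ↔
      ∃ a : ℝ, f =
        ((∑ n ∈ Finset.Icc 1 (φ.natDegree + 1),
            (A n / psiFact s n) • (psiDeriv s)^[n - 1] φ) + psiInt s φ) + C a) := by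
  -- kernel characterization
  have hker : ∀ p : ℝ[X], psiDeriv s (opSeries s c p) = 0 ↔ ∃ a : ℝ, p = C a := by
    intro p
    constructor
    · intro h
      obtain ⟨b, hb⟩ := psiDeriv_eq_zero_imp s hs0 hs _ h
      refine ⟨A 0 * b, ?_⟩
      have := hinv' p
      rw [hb, opSeries_C] at this
      exact this.symm
    · rintro ⟨a, rfl⟩
      rw [opSeries_C, psiDeriv_C s hs0]
  refine ⟨hker, fun f => ?_⟩
  set f₀ : ℝ[X] := (∑ n ∈ Finset.Icc 1 (φ.natDegree + 1),
      (A n / psiFact s n) • (psiDeriv s)^[n - 1] φ) + psiInt s φ with hf₀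
  have hpart : psiDeriv s (opSeries s c f₀) = φ := by
    rw [hf₀, ← particular_eq s A hs0 hs hA0 φ, hinv, psiDeriv_psiInt s hs]
  constructor
  · intro h
    have hQ : psiDeriv s (opSeries s c (f - f₀)) = 0 := by
      have hsplit : f = (f - f₀) + f₀ := by ring
      have : psiDeriv s (opSeries s c ((f - f₀) + f₀)) = φ := by rw [← hsplit]; exact h
      rw [opSeries_add s c hs0, psiDeriv_add, hpart] at this
      exact add_right_cancel (this.trans (zero_add φ).symm)
    obtain ⟨a, ha⟩ := (hker _).mp hQ
    exact ⟨a, by rw [← ha]; ring⟩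
  · rintro ⟨a, rfl⟩
    rw [opSeries_add s c hs0, psiDeriv_add, hpart, opSeries_C, psiDeriv_C s hs0, add_zero]
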